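/- Let η₁ ∈ ℝ, σ ∈ {1,-1}, and let A₁, A₂ : ℝ → ℂ solve the ODE system for the standard-form nonlinearity with parameters (σ, η₁, η₂, η₃, λ₀, q₁, q₂, q₃) where λ₀ = 0 and q₁=q₂=q₃=0. Then the quantity |A₁(t)|⁴ + 2σ tanh(η₁)·|A₁(t)|²|A₂(t)|² + |A₂(t)|⁴ is constant in t. -/

import Mathlib

open Real

theorem stmt16 (σ η₁ η₂ η₃ : ℝ) (hσ : σ = 1 ∨ σ = -1)
    (A₁ A₂ A₁' A₂' : ℝ → ℂ)
    (hd₁ : ∀ t, HasDerivAt A₁ (A₁' t) t)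
    (hd₂ : ∀ t, HasDerivAt A₂ (A₂' t) t)
    (hode₁ : ∀ t, Complex.I * A₁' t
      = ((η₂ * Real.sinh η₁ - σ * η₃ * Real.cosh η₁ : ℝ) : ℂ)
          * (Complex.normSq (A₁ t) : ℂ) * A₁ t
        + ((Real.sinh η₁ : ℝ) : ℂ)
          * (2 * (Complex.normSq (A₁ t) : ℂ) * A₂ t + A₁ t ^ 2 * (starRingEnd ℂ) (A₂ t))
        + ((σ * Real.cosh η₁ : ℝ) : ℂ) * (Complex.normSq (A₂ t) : ℂ) * A₂ t)
    (hode₂ : ∀ t, Complex.I * A₂' t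
      = ((σ * Real.cosh η₁ : ℝ) : ℂ) * (Complex.normSq (A₁ t) : ℂ) * A₁ t
        + ((Real.sinh η₁ : ℝ) : ℂ)
          * (2 * A₁ t * (Complex.normSq (A₂ t) : ℂ) + (starRingEnd ℂ) (A₁ t) * A₂ t ^ 2)
        + ((-σ * η₂ * Real.cosh η₁ + η₃ * Real.sinh η₁ : ℝ) : ℂ)
          * (Complex.normSq (A₂ t) : ℂ) * A₂ t) :
    ∀ s t : ℝ,
      Complex.normSq (A₁ s) ^ 2
          + 2 * σ * Real.tanh η₁ * Complex.normSq (A₁ s) * Complex.normSq (A₂ s)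
          + Complex.normSq (A₂ s) ^ 2
        = Complex.normSq (A₁ t) ^ 2
          + 2 * σ * Real.tanh η₁ * Complex.normSq (A₁ t) * Complex.normSq (A₂ t)
          + Complex.normSq (A₂ t) ^ 2 := by
  have hc0 : Real.cosh η₁ ≠ 0 := (Real.cosh_pos η₁).ne'
  have hτ : Real.sinh η₁ = Real.tanh η₁ * Real.cosh η₁ := by
    rw [Real.tanh_eq_sinh_div_cosh]; field_simp
  set f : ℝ → ℝ := fun u => Complex.normSq (A₁ u) ^ 2
      + 2 * σ * Real.tanh η₁ * Complex.normSq (A₁ u) * Complex.normSq (A₂ u)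
      + Complex.normSq (A₂ u) ^ 2 with hf
  have key : ∀ t, HasDerivAt f 0 t := by
    intro t
    have e₁ : A₁' t = -Complex.I *
        (((η₂ * Real.sinh η₁ - σ * η₃ * Real.cosh η₁ : ℝ) : ℂ)
          * (Complex.normSq (A₁ t) : ℂ) * A₁ t
        + ((Real.sinh η₁ : ℝ) : ℂ)
          * (2 * (Complex.normSq (A₁ t) : ℂ) * A₂ t + A₁ t ^ 2 * (starRingEnd ℂ) (A₂ t))
        + ((σ * Real.cosh η₁ : ℝ) : ℂ) * (Complex.normSq (A₂ t) : ℂ) * A₂ t) := by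
      linear_combination (-Complex.I) * hode₁ t + (A₁' t) * Complex.I_sq
    have e₂ : A₂' t = -Complex.I *
        (((σ * Real.cosh η₁ : ℝ) : ℂ) * (Complex.normSq (A₁ t) : ℂ) * A₁ t
        + ((Real.sinh η₁ : ℝ) : ℂ)
          * (2 * A₁ t * (Complex.normSq (A₂ t) : ℂ) + (starRingEnd ℂ) (A₁ t) * A₂ t ^ 2)
        + ((-σ * η₂ * Real.cosh η₁ + η₃ * Real.sinh η₁ : ℝ) : ℂ)
          * (Complex.normSq (A₂ t) : ℂ) * A₂ t) := by
      linear_combination (-Complex.I) * hode₂ t + (A₂' t) * Complex.I_sq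
    have m₁ : HasDerivAt (fun u => A₁ u * star (A₁ u))
        (A₁' t * star (A₁ t) + A₁ t * star (A₁' t)) t := (hd₁ t).mul (hd₁ t).star
    have m₂ : HasDerivAt (fun u => A₂ u * star (A₂ u))
        (A₂' t * star (A₂ t) + A₂ t * star (A₂' t)) t := (hd₂ t).mul (hd₂ t).star
    have n₁ : HasDerivAt (fun u => Complex.normSq (A₁ u))
        ((A₁' t * star (A₁ t) + A₁ t * star (A₁' t)).re) t := by
      have := Complex.reCLM.hasFDerivAt.comp_hasDerivAt t m₁
      simpa [Function.comp_def, Complex.reCLM_apply, Complex.mul_conj] using this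
    have n₂ : HasDerivAt (fun u => Complex.normSq (A₂ u))
        ((A₂' t * star (A₂ t) + A₂ t * star (A₂' t)).re) t := by
      have := Complex.reCLM.hasFDerivAt.comp_hasDerivAt t m₂
      simpa [Function.comp_def, Complex.reCLM_apply, Complex.mul_conj] using this
    set D₁ := (A₁' t * star (A₁ t) + A₁ t * star (A₁' t)).re with hD₁
    set D₂ := (A₂' t * star (A₂ t) + A₂ t * star (A₂' t)).re with hD₂
    have hF : HasDerivAt f
        ((2 : ℕ) * Complex.normSq (A₁ t) ^ 1 * D₁
          + (2 * σ * Real.tanh η₁) * (D₁ * Complex.normSq (A₂ t) + Complex.normSq (A₁ t) * D₂)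
          + (2 : ℕ) * Complex.normSq (A₂ t) ^ 1 * D₂) t := by
      have := ((n₁.pow 2).add (((n₁.mul n₂).const_mul (2 * σ * Real.tanh η₁)))).add (n₂.pow 2)
      convert this using 1
      · rfl
      · rfl
      · ext u; simp only [hf, Pi.add_apply, Pi.pow_apply, Pi.mul_apply]; ring
    have hzero : ((2 : ℕ) * Complex.normSq (A₁ t) ^ 1 * D₁
          + (2 * σ * Real.tanh η₁) * (D₁ * Complex.normSq (A₂ t) + Complex.normSq (A₁ t) * D₂)
          + (2 : ℕ) * Complex.normSq (A₂ t) ^ 1 * D₂) = 0 := by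
      rw [hD₁, hD₂, e₁, e₂, hτ]
      rcases hσ with h | h <;> subst h <;>
        simp [Complex.normSq_apply, Complex.mul_re, Complex.mul_im, Complex.add_re,
          Complex.add_im, Complex.ofReal_re, Complex.ofReal_im, Complex.star_def,
          Complex.conj_re, Complex.conj_im, Complex.tanh_ofReal_re, pow_two] <;> ring
    rw [hzero] at hF
    exact hF
  intro s t
  exact is_const_of_deriv_eq_zero (fun x => (key x).differentiableAt)
    (fun x => (key x).deriv) s t
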